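/- For every real β > 0 and every real x with 0 ≤ x < 1, the series ∑_{p=1}^{∞} A_p(β) x^p converges absolutely and its sum equals 2(cos(β·√(x/(1−x))) − 1). -/

import Mathlib

/-- The coefficients of the order-2P multiderivative wave scheme:
`A p β = 2 ∑_{m=1}^{p} (−1)^m (β^{2m}/(2m)!) · C(p−1, m−1)`. -/
noncomputable def A (p : ℕ) (β : ℝ) : ℝ :=
  2 * ∑ m ∈ Finset.Icc 1 p,
    (-1 : ℝ) ^ m * β ^ (2 * m) / (Nat.factorial (2 * m)) * ((p - 1).choose (m - 1))

private lemma choose_hasSum (m : ℕ) {x : ℝ} (hx0 : 0 ≤ x) (hx1 : x < 1) :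
    HasSum (fun j : ℕ => (j.choose m : ℝ) * x ^ (j + 1)) ((x / (1 - x)) ^ (m + 1)) := by
  have hn : ‖x‖ < 1 := by rwa [Real.norm_eq_abs, abs_of_nonneg hx0]
  have h1 := (hasSum_choose_mul_geometric_of_norm_lt_one (𝕜 := ℝ) m hn).mul_left (x ^ (m + 1))
  have h2 : HasSum (fun n : ℕ => ((n + m).choose m : ℝ) * x ^ (n + m + 1))
      ((x / (1 - x)) ^ (m + 1)) := by
    convert h1 using 2 with n
    · rfl
    · ring
    · rw [div_pow, div_eq_mul_one_div]
  rw [hasSum_nat_add_iff (f := fun j : ℕ => (j.choose m : ℝ) * x ^ (j + 1)) m] at h2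
  convert h2 using 1
  · rfl
  rw [Finset.sum_eq_zero, add_zero]
  intro i hi
  rw [Finset.mem_range] at hi
  rw [Nat.choose_eq_zero_of_lt hi]
  simp

set_option maxHeartbeats 1000000 in
/-- `∑_{p=1}^{∞} A_p(β) x^p` converges absolutely to `2(cos(β√(x/(1−x))) − 1)`
for `0 ≤ x < 1` (indexing `p = j + 1`). -/
theorem stmt_7 (β : ℝ) (hβ : 0 < β) (x : ℝ) (hx0 : 0 ≤ x) (hx1 : x < 1) :
    Summable (fun j : ℕ => |A (j + 1) β * x ^ (j + 1)|) ∧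
    ∑' j : ℕ, A (j + 1) β * x ^ (j + 1) =
      2 * (Real.cos (β * Real.sqrt (x / (1 - x))) - 1) := by
  set y : ℝ := x / (1 - x) with hy_def
  have hx1' : 0 < 1 - x := by linarith
  have hy : 0 ≤ y := div_nonneg hx0 hx1'.le
  set t : ℝ := β * Real.sqrt y with ht_def
  have hty : ∀ k : ℕ, t ^ (2 * k) = β ^ (2 * k) * y ^ k := by
    intro k
    rw [mul_pow, pow_mul (Real.sqrt y), Real.sq_sqrt hy]
  -- the double family
  set F : ℕ → ℕ → ℝ := fun m j =>
    (-1 : ℝ) ^ (m + 1) * β ^ (2 * (m + 1)) / (Nat.factorial (2 * (m + 1))) *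
      (j.choose m : ℝ) * x ^ (j + 1) with hF_def
  set G : ℕ → ℕ → ℝ := fun m j =>
    β ^ (2 * (m + 1)) / (Nat.factorial (2 * (m + 1))) * (j.choose m : ℝ) * x ^ (j + 1)
    with hG_def
  have hGnonneg : ∀ m j, 0 ≤ G m j := by
    intro m j
    apply mul_nonneg (mul_nonneg _ (Nat.cast_nonneg _)) (pow_nonneg hx0 _)
    exact div_nonneg (by positivity) (Nat.cast_nonneg _)
  have habsF : ∀ m j, |F m j| = G m j := by
    intro m j
    have : F m j = (-1 : ℝ) ^ (m + 1) * G m j := by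
      simp only [hF_def, hG_def]; ring
    rw [this, abs_mul, abs_pow, abs_neg, abs_one, one_pow, one_mul,
      abs_of_nonneg (hGnonneg m j)]
  -- per-m sums
  have hGsum : ∀ m, HasSum (fun j => G m j) (t ^ (2 * (m + 1)) / Nat.factorial (2 * (m + 1))) := by
    intro m
    have h := (choose_hasSum m hx0 hx1).mul_left
      (β ^ (2 * (m + 1)) / Nat.factorial (2 * (m + 1)))
    convert h using 1
    · rfl
    · ext j; simp only [hG_def]; ring
    · rw [hty]; ring
  have hFsum : ∀ m, HasSum (fun j => F m j)
      ((-1 : ℝ) ^ (m + 1) * t ^ (2 * (m + 1)) / Nat.factorial (2 * (m + 1))) := by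
    intro m
    have h := (choose_hasSum m hx0 hx1).mul_left
      ((-1 : ℝ) ^ (m + 1) * β ^ (2 * (m + 1)) / Nat.factorial (2 * (m + 1)))
    convert h using 1
    · rfl
    · ext j; simp only [hF_def]; ring
    · rw [hty]; ring
  -- summability of the head series
  have hhead : Summable fun m : ℕ => t ^ (2 * (m + 1)) / (Nat.factorial (2 * (m + 1)) : ℝ) := by
    have h := (Real.summable_pow_div_factorial t).comp_injective
      (i := fun m : ℕ => 2 * (m + 1)) (fun a b h => by simp only at h; omega)
    exact h
  -- product summability of G
  have hGprod : Summable (fun p : ℕ × ℕ => G p.1 p.2) := by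
    rw [summable_prod_of_nonneg (fun p => hGnonneg p.1 p.2)]
    refine ⟨fun m => (hGsum m).summable, ?_⟩
    have : (fun m : ℕ => ∑' j, G m j)
        = fun m => t ^ (2 * (m + 1)) / Nat.factorial (2 * (m + 1)) := by
      ext m; exact (hGsum m).tsum_eq
    rw [this]; exact hhead
  -- swapped product summability
  have hGprod' : Summable (fun p : ℕ × ℕ => G p.2 p.1) :=
    ((Equiv.prodComm ℕ ℕ).summable_iff.mpr hGprod)
  obtain ⟨hGcol, hGrow⟩ := (summable_prod_of_nonneg (fun p => hGnonneg p.2 p.1)).mp hGprod'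
  -- F summable on the product
  have hFprod : Summable (fun p : ℕ × ℕ => F p.1 p.2) := by
    apply Summable.of_abs
    simpa only [habsF] using hGprod
  -- key pointwise identity
  have hA : ∀ j : ℕ, A (j + 1) β * x ^ (j + 1) = 2 * ∑' m : ℕ, F m j := by
    intro j
    have hfin : ∑' m : ℕ, F m j = ∑ m ∈ Finset.range (j + 1), F m j := by
      apply tsum_eq_sum
      intro m hm
      rw [Finset.mem_range, not_lt] at hm
      simp only [hF_def]
      rw [Nat.choose_eq_zero_of_lt (by omega)]
      simp
    have h1 : ∑ m ∈ Finset.Icc 1 (j + 1),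
        ((-1 : ℝ) ^ m * β ^ (2 * m) / (Nat.factorial (2 * m)) * ((j + 1 - 1).choose (m - 1)))
        = ∑ i ∈ Finset.range (j + 1),
        ((-1 : ℝ) ^ (i + 1) * β ^ (2 * (i + 1)) / (Nat.factorial (2 * (i + 1))) *
          (j.choose i : ℝ)) := by
      rw [← Finset.Ico_add_one_right_eq_Icc, Finset.sum_Ico_eq_sum_range]
      apply Finset.sum_congr (by norm_num)
      intro i _
      rw [show (1 : ℕ) + i = i + 1 by omega]
      norm_num
    calc A (j + 1) β * x ^ (j + 1)
        = 2 * ((∑ i ∈ Finset.range (j + 1),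
            ((-1 : ℝ) ^ (i + 1) * β ^ (2 * (i + 1)) / (Nat.factorial (2 * (i + 1))) *
              (j.choose i : ℝ))) * x ^ (j + 1)) := by rw [A, h1, mul_assoc]
      _ = 2 * ∑ i ∈ Finset.range (j + 1), F i j := by rw [Finset.sum_mul]
      _ = 2 * ∑' m : ℕ, F m j := by rw [hfin]
  -- Part 1: absolute summability
  have habsA : ∀ j, |A (j + 1) β * x ^ (j + 1)| ≤ 2 * ∑' m, G m j := by
    intro j
    rw [hA j, abs_mul, abs_two]
    gcongr
    calc |∑' m, F m j| ≤ ∑' m, |F m j| := by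
          have hs : Summable fun m => |F m j| := by
            simpa only [habsF] using hGcol j
          have h := norm_tsum_le_tsum_norm (f := fun m : ℕ => F m j) (by simpa using hs)
          simpa using h
      _ = ∑' m, G m j := by simp only [habsF]
  have hsum1 : Summable (fun j : ℕ => |A (j + 1) β * x ^ (j + 1)|) := by
    apply Summable.of_nonneg_of_le (fun j => abs_nonneg _) habsA
    exact hGrow.mul_left 2
  refine ⟨hsum1, ?_⟩
  -- Part 2: value of the sum
  have hswap : ∑' j : ℕ, ∑' m : ℕ, F m j = ∑' m : ℕ, ∑' j : ℕ, F m j :=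
    Summable.tsum_comm (f := F) hFprod
  have hcos : HasSum (fun m : ℕ => (-1 : ℝ) ^ (m + 1) * t ^ (2 * (m + 1)) /
      Nat.factorial (2 * (m + 1))) (Real.cos t - 1) := by
    have h := Real.hasSum_cos t
    rw [show Real.cos t = (Real.cos t - 1) +
        ∑ i ∈ Finset.range 1, (-1 : ℝ) ^ i * t ^ (2 * i) / Nat.factorial (2 * i) by
      simp] at h
    exact (hasSum_nat_add_iff 1).mpr h
  calc ∑' j : ℕ, A (j + 1) β * x ^ (j + 1)
      = ∑' j : ℕ, 2 * ∑' m : ℕ, F m j := by exact tsum_congr hA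
    _ = 2 * ∑' j : ℕ, ∑' m : ℕ, F m j := tsum_mul_left
    _ = 2 * ∑' m : ℕ, ∑' j : ℕ, F m j := by rw [hswap]
    _ = 2 * (Real.cos t - 1) := by
        congr 1
        rw [← hcos.tsum_eq]
        exact tsum_congr fun m => (hFsum m).tsum_eq
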